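/- arXiv:2307.11857 — 2 statements merged into one kernel-verified Lean document; each statement's English description precedes it below -/
import Mathlib

section
/- Let g : {0,1}^n → ℝ^n be monotone increasing and u ∈ ℝ̄^n. Define the threshold t = g(e_u^i(+∞))_i, where e_u^i(x) = E(u[i:=x]). Then for all x ≤ t we have (e_u^i(x))_i = 1, and for all x > t we have (e_u^i(x))_i = 0 and moreover e_u^i(x) = e_u^i(+∞). -/
open Function

/-- Best-response map: `G_u(y) i = 𝟙(g(y)_i ≥ u_i)`, comparisons in the extended reals. -/
noncomputable def Gmap {n : ℕ} (g : (Fin n → Bool) → Fin n → ℝ) (u : Fin n → EReal)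
    (y : Fin n → Bool) : Fin n → Bool :=
  fun i => decide (u i ≤ ((g y i : ℝ) : EReal))

/-- Minimal equilibrium: `E(u) = (G_u)^[n](0)`. -/
noncomputable def Emin {n : ℕ} (g : (Fin n → Bool) → Fin n → ℝ) (u : Fin n → EReal) : Fin n → Bool :=
  (Gmap g u)^[n] (fun _ => false)

section Aux

variable {n : ℕ}

lemma Gmap_mono {g : (Fin n → Bool) → Fin n → ℝ} (hg : Monotone g) (u : Fin n → EReal) :
    Monotone (Gmap g u) := by
  intro y y' h i
  simp only [Gmap]
  have hgy : ((g y i : ℝ) : EReal) ≤ ((g y' i : ℝ) : EReal) := by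
    exact_mod_cast hg h i
  by_cases hc : u i ≤ ((g y i : ℝ) : EReal)
  · simp [hc, le_trans hc hgy]
  · simp [hc]

lemma Gmap_anti {g : (Fin n → Bool) → Fin n → ℝ} {u u' : Fin n → EReal} (h : u ≤ u')
    (y : Fin n → Bool) : Gmap g u' y ≤ Gmap g u y := by
  intro i
  simp only [Gmap]
  by_cases hc : u' i ≤ ((g y i : ℝ) : EReal)
  · simp [hc, le_trans (h i) hc]
  · simp [hc]

lemma iter_le_succ (f : (Fin n → Bool) → Fin n → Bool) (hf : Monotone f) (k : ℕ) :
    f^[k] (fun _ => false) ≤ f^[k + 1] (fun _ => false) := by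
  rw [Function.iterate_succ_apply]
  exact hf.iterate k (fun i => Bool.false_le _)

lemma iter_fixed (f : (Fin n → Bool) → Fin n → Bool) (hf : Monotone f) :
    f (f^[n] (fun _ => false)) = f^[n] (fun _ => false) := by
  set a : ℕ → Fin n → Bool := fun k => f^[k] (fun _ => false) with ha
  have hle : ∀ k, a k ≤ a (k + 1) := fun k => iter_le_succ f hf k
  have key : ∀ k, f (a k) = a k ∨ k ≤ (Finset.univ.filter (fun i => a k i = true)).card := by
    intro k
    induction k with
    | zero => exact Or.inr (Nat.zero_le _)
    | succ k ih =>
      rcases ih with hfix | hcard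
      · left
        have : a (k + 1) = a k := by
          show f^[k+1] (fun _ => false) = _
          rw [Function.iterate_succ_apply']
          exact hfix
        rw [this]; exact hfix
      · by_cases heq : a (k + 1) = a k
        · left
          have hfx : f (a k) = a k := by
            have : a (k+1) = f (a k) := by
              show f^[k+1] (fun _ => false) = _
              rw [Function.iterate_succ_apply']
            rw [← this, heq]
          have : a (k + 1) = a k := heq
          rw [this]; exact hfx
        · right
          have hsub : (Finset.univ.filter (fun i => a k i = true)) ⊂
              (Finset.univ.filter (fun i => a (k+1) i = true)) := by
            constructor
            · intro j hj
              simp only [Finset.mem_filter, Finset.mem_univ, true_and] at hj ⊢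
              have := hle k j
              rw [hj] at this
              exact le_antisymm (Bool.le_true _) this
            · intro hcon
              apply heq
              funext j
              by_cases hj : a k j = true
              · have : j ∈ Finset.univ.filter (fun i => a (k+1) i = true) := by
                  have := hle k j
                  rw [hj] at this
                  simp [le_antisymm (Bool.le_true _) this]
                simp only [Finset.mem_filter, Finset.mem_univ, true_and] at this
                rw [this, hj]
              · by_cases hj' : a (k+1) j = true
                · have : j ∈ Finset.univ.filter (fun i => a k i = true) := by
                    apply hcon; simp [hj']
                  simp only [Finset.mem_filter, Finset.mem_univ, true_and] at this
                  exact absurd this hj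
                · rw [Bool.not_eq_true] at hj hj'
                  rw [hj, hj']
          have := Finset.card_lt_card hsub
          omega
  rcases key n with hfix | hcard
  · exact hfix
  · have hcard' : (Finset.univ.filter (fun i => a n i = true)).card = n := by
      have hle' : (Finset.univ.filter (fun i => a n i = true)).card ≤ n := by
        have := Finset.card_filter_le (Finset.univ : Finset (Fin n)) (fun i => a n i = true)
        simpa using this
      omega
    have hall : ∀ j, a n j = true := by
      intro j
      have hceq : (Finset.univ.filter (fun i => a n i = true)).card =
          (Finset.univ : Finset (Fin n)).card := by simpa using hcard'
      exact (Finset.filter_card_eq hceq j (Finset.mem_univ j))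
    funext j
    show f (a n) j = a n j
    have h1 : a n j ≤ f (a n) j := by
      have := hle n j
      have heq : a (n+1) = f (a n) := by
        show f^[n+1] (fun _ => false) = _
        rw [Function.iterate_succ_apply']
      rwa [heq] at this
    rw [hall j] at h1 ⊢
    exact le_antisymm (Bool.le_true _) h1

lemma Emin_isFixed {g : (Fin n → Bool) → Fin n → ℝ} (hg : Monotone g) (u : Fin n → EReal) :
    Gmap g u (Emin g u) = Emin g u :=
  iter_fixed (Gmap g u) (Gmap_mono hg u)

lemma Emin_le_fixed {g : (Fin n → Bool) → Fin n → ℝ} (hg : Monotone g) (u : Fin n → EReal)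
    {p : Fin n → Bool} (hp : Gmap g u p = p) : Emin g u ≤ p := by
  have key : ∀ k, (Gmap g u)^[k] (fun _ => false) ≤ p := by
    intro k
    induction k with
    | zero => exact fun i => Bool.false_le _
    | succ k ih =>
      rw [Function.iterate_succ_apply']
      calc Gmap g u ((Gmap g u)^[k] (fun _ => false)) ≤ Gmap g u p := Gmap_mono hg u ih
        _ = p := hp
  exact key n

lemma Emin_anti {g : (Fin n → Bool) → Fin n → ℝ} (hg : Monotone g) {u u' : Fin n → EReal}
    (h : u ≤ u') : Emin g u' ≤ Emin g u := by
  have key : ∀ k, (Gmap g u')^[k] (fun _ => false) ≤ (Gmap g u)^[k] (fun _ => false) := by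
    intro k
    induction k with
    | zero => exact le_refl _
    | succ k ih =>
      rw [Function.iterate_succ_apply', Function.iterate_succ_apply']
      calc Gmap g u' ((Gmap g u')^[k] (fun _ => false))
            ≤ Gmap g u ((Gmap g u')^[k] (fun _ => false)) := Gmap_anti h _
        _ ≤ Gmap g u ((Gmap g u)^[k] (fun _ => false)) := Gmap_mono hg u ih
  exact key n

end Aux

/-- The threshold of `e_u^i` is `t = g(e_u^i(+∞))_i`: below `t` the `i`-th coordinate of
the minimal equilibrium is `1`; strictly above `t` it is `0` and the minimal equilibrium
coincides with `e_u^i(+∞)`. -/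
theorem threshold_formula {n : ℕ} (g : (Fin n → Bool) → Fin n → ℝ) (hg : Monotone g)
    (u : Fin n → EReal) (i : Fin n) :
    (∀ x : EReal, x ≤ ((g (Emin g (Function.update u i ⊤)) i : ℝ) : EReal) →
        Emin g (Function.update u i x) i = true) ∧
    (∀ x : EReal, ((g (Emin g (Function.update u i ⊤)) i : ℝ) : EReal) < x →
        Emin g (Function.update u i x) i = false ∧
        Emin g (Function.update u i x) = Emin g (Function.update u i ⊤)) := by
  set etop := Emin g (Function.update u i ⊤) with hetop
  set t : EReal := ((g etop i : ℝ) : EReal) with ht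
  have hfixtop : Gmap g (Function.update u i ⊤) etop = etop := Emin_isFixed hg _
  have hule : ∀ x : EReal, Function.update u i x ≤ Function.update u i ⊤ := by
    intro x j
    by_cases hj : j = i
    · subst hj; simp
    · simp [Function.update_of_ne hj]
  constructor
  · intro x hx
    set e := Emin g (Function.update u i x) with he
    have hfixe : Gmap g (Function.update u i x) e = e := Emin_isFixed hg _
    have hge : etop ≤ e := Emin_anti hg (hule x)
    have hgi : (g etop i : ℝ) ≤ g e i := hg hge i
    have hxle : x ≤ ((g e i : ℝ) : EReal) := le_trans hx (by rw [ht]; exact_mod_cast hgi)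
    have : e i = Gmap g (Function.update u i x) e i := by rw [hfixe]
    rw [this]
    simp [Gmap, hxle]
  · intro x hx
    have hfix : Gmap g (Function.update u i x) etop = etop := by
      funext j
      by_cases hj : j = i
      · rw [hj]
        have hnx : ¬ (x ≤ t) := not_le.mpr hx
        have hfalse : Gmap g (Function.update u i x) etop i = false := by
          simp only [Gmap, Function.update_self, decide_eq_false_iff_not]
          rw [ht] at hnx
          exact hnx
        rw [hfalse]
        have hrw : etop i = Gmap g (Function.update u i ⊤) etop i := by rw [hfixtop]
        rw [hrw]
        simp only [Gmap, Function.update_self]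
        have hnt : ¬ ((⊤ : EReal) ≤ ((g etop i : ℝ) : EReal)) :=
          not_le.mpr (EReal.coe_lt_top _)
        simp [hnt]
      · have : Gmap g (Function.update u i x) etop j =
            Gmap g (Function.update u i ⊤) etop j := by
          simp only [Gmap, Function.update_of_ne hj]
        rw [this, hfixtop]
    have h1 : Emin g (Function.update u i x) ≤ etop := Emin_le_fixed hg _ hfix
    have h2 : etop ≤ Emin g (Function.update u i x) := Emin_anti hg (hule x)
    have heq : Emin g (Function.update u i x) = etop := le_antisymm h1 h2
    refine ⟨?_, heq⟩
    rw [heq]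
    have : etop i = Gmap g (Function.update u i ⊤) etop i := by rw [hfixtop]
    rw [this]
    simp only [Gmap, Function.update_self]
    have : ¬ ((⊤ : EReal) ≤ ((g etop i : ℝ) : EReal)) := not_le.mpr (EReal.coe_lt_top _)
    simp [this]
end

section
/- Let g : {0,1}^n → ℝ^n be monotone increasing and let u ∈ ℝ̄^n with minimal equilibrium y = E(u). For every coordinate k with y_k = 0, the shock satisfies u_k > g(y)_k. Moreover, replacing u_k by +∞ does not change the minimal equilibrium: E(u[k:=+∞]) = y. -/
open Function

lemma gmap_mono {n : ℕ} (g : (Fin n → Bool) → Fin n → ℝ) (hg : Monotone g)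
    (u : Fin n → EReal) : Monotone (Gmap g u) := by
  intro y z hyz i
  simp only [Gmap]
  have h : ((g y i : ℝ) : EReal) ≤ ((g z i : ℝ) : EReal) := by
    exact_mod_cast hg hyz i
  by_cases hc : u i ≤ ((g y i : ℝ) : EReal)
  · simp [hc, hc.trans h]
  · simp [hc]

lemma chain_mono {α : Type*} [Preorder α] {F : α → α} (hF : Monotone F) {b : α}
    (hb : b ≤ F b) : ∀ m, F^[m] b ≤ F^[m+1] b := by
  intro m; induction m with
  | zero => simpa
  | succ m ih =>
    rw [Function.iterate_succ_apply', Function.iterate_succ_apply']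
    exact hF ih

lemma card_lt {n : ℕ} {a b : Fin n → Bool} (hab : a ≤ b) (hne : a ≠ b) :
    (Finset.univ.filter fun i => a i = true).card <
      (Finset.univ.filter fun i => b i = true).card := by
  apply Finset.card_lt_card
  constructor
  · intro i hi
    simp only [Finset.mem_filter, Finset.mem_univ, true_and] at hi ⊢
    have := hab i
    rw [hi] at this
    cases hbi : b i
    · rw [hbi] at this; exact absurd this (by simp)
    · rfl
  · intro hsub
    apply hne
    funext i
    have h1 := hab i
    cases hai : a i
    · cases hbi : b i
      · rfl
      · exfalso
        have : i ∈ Finset.univ.filter fun j => a j = true := by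
          apply hsub; simp [hbi]
        simp [hai] at this
    · rw [hai] at h1
      cases hbi : b i
      · rw [hbi] at h1; exact absurd h1 (by simp)
      · rfl

lemma fixed_of_iterate {n : ℕ} {F : (Fin n → Bool) → (Fin n → Bool)} (hF : Monotone F) :
    F (F^[n] (fun _ => false)) = F^[n] (fun _ => false) := by
  set c : ℕ → Fin n → Bool := fun m => F^[m] (fun _ => false) with hc
  have hbot : (fun _ : Fin n => false) ≤ F (fun _ => false) := fun i => Bool.false_le _
  have hmono : ∀ m, c m ≤ c (m+1) := chain_mono hF hbot
  by_cases hstab : ∃ m, m ≤ n ∧ c (m+1) = c m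
  · obtain ⟨m, hm, heq⟩ := hstab
    have hFfix : F (c m) = c m := by
      have : c (m+1) = F (c m) := by simp [hc, Function.iterate_succ_apply']
      rw [← this, heq]
    have hfix : ∀ j, c (m + j) = c m := by
      intro j; induction j with
      | zero => rfl
      | succ j ih =>
        have h1 : c (m + (j+1)) = F (c (m+j)) := by
          show F^[m+j+1] _ = _
          rw [Function.iterate_succ_apply']
        rw [h1, ih, hFfix]
    obtain ⟨j, rfl⟩ := Nat.exists_eq_add_of_le hm
    have h1 : c (m + j) = c m := hfix j
    have h2 : F (c (m+j)) = c (m+j+1) := by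
      simp [hc, Function.iterate_succ_apply']
    show F (c (m + j)) = c (m + j)
    rw [h1]; exact hFfix
  · exfalso
    push_neg at hstab
    set N : ℕ → ℕ := fun m => (Finset.univ.filter fun i => c m i = true).card with hN
    have key : ∀ m, m ≤ n + 1 → m ≤ N m := by
      intro m
      induction m with
      | zero => intro _; exact Nat.zero_le _
      | succ m ih =>
        intro hm
        have hmn : m ≤ n := Nat.lt_succ_iff.mp hm
        have h1 : m ≤ N m := ih (le_trans hmn (Nat.le_succ n))
        have h2 : N m < N (m+1) := card_lt (hmono m) (fun h => hstab m hmn h.symm)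
        omega
    have h3 : N (n+1) ≤ n := by
      have : (Finset.univ.filter fun i => c (n+1) i = true).card ≤ (Finset.univ : Finset (Fin n)).card :=
        Finset.card_le_card (Finset.filter_subset _ _)
      simpa using this
    have := key (n+1) le_rfl
    omega

/-- If `y = E(u)` is the minimal equilibrium and `y_k = 0`, then `u_k > g(y)_k`, and
replacing `u_k` by `+∞` does not change the minimal equilibrium. -/
theorem shock_gt_of_no_action {n : ℕ} (g : (Fin n → Bool) → Fin n → ℝ)
    (hg : Monotone g) (u : Fin n → EReal) (y : Fin n → Bool) (hy : Emin g u = y)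
    (k : Fin n) (hk : y k = false) :
    ((g y k : ℝ) : EReal) < u k ∧ Emin g (Function.update u k ⊤) = y := by
  have hF : Monotone (Gmap g u) := gmap_mono g hg u
  have hfix : Gmap g u y = y := by
    rw [← hy]; exact fixed_of_iterate hF
  have hyk : Gmap g u y k = false := by rw [hfix]; exact hk
  have hlt : ((g y k : ℝ) : EReal) < u k := by
    simp only [Gmap, decide_eq_false_iff_not, not_le] at hyk
    exact hyk
  refine ⟨hlt, ?_⟩
  -- Second part
  set u' := Function.update u k ⊤ with hu'
  set c : ℕ → Fin n → Bool := fun m => (Gmap g u)^[m] (fun _ => false) with hc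
  have hbot : (fun _ : Fin n => false) ≤ Gmap g u (fun _ => false) := fun i => Bool.false_le _
  have hchain : ∀ m, c m ≤ c (m+1) := chain_mono hF hbot
  have hmono : Monotone c := monotone_nat_of_le_succ hchain
  have hcn : c n = y := hy
  have hcle : ∀ m, m ≤ n → c m ≤ y := fun m hm => hcn ▸ hmono hm
  -- Gmap with u' agrees with Gmap with u on z whenever (Gmap g u z) k = false
  have hagree : ∀ z : Fin n → Bool, Gmap g u z k = false → Gmap g u' z = Gmap g u z := by
    intro z hz
    funext i
    by_cases hik : i = k
    · subst hik
      rw [hz]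
      simp only [Gmap, hu', Function.update_self, decide_eq_false_iff_not, not_le]
      exact EReal.coe_lt_top _
    · simp only [Gmap, hu', Function.update_of_ne hik]
  have hiter : ∀ m, m ≤ n → (Gmap g u')^[m] (fun _ => false) = c m := by
    intro m
    induction m with
    | zero => intro _; rfl
    | succ m ih =>
      intro hm
      have hmn : m ≤ n := Nat.le_of_succ_le hm
      rw [Function.iterate_succ_apply', ih hmn]
      have hck : Gmap g u (c m) k = false := by
        have h1 : Gmap g u (c m) = c (m+1) := by
          simp [hc, Function.iterate_succ_apply']
        rw [h1]
        have := hcle (m+1) hm k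
        rw [hk] at this
        cases h : c (m+1) k <;> simp_all [Bool.le_iff_imp]
      rw [hagree (c m) hck]
      simp [hc, Function.iterate_succ_apply']
  show (Gmap g u')^[n] (fun _ => false) = y
  rw [hiter n le_rfl, hcn]
end
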